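/- Let w, Y be square-integrable random variables with w > 0, and let m > 0 with P(w < m) > 0 and E[w | w < m] = 1. Suppose w* is square-integrable with E[w* · 1{w < m} | X] = w · 1{w < m} in the sense that E[(w - w*)·h(w)·1{w<m}] = 0 for measurable h, and E[w* | w < m] = 1. Then E[(w - w*)·Y | w < m] = cov(w - w*, Y | w < m), and |E[(w - w*)Y | w < m]| ≤ √(1 - cor(w, Y | w<m)²)·√(var(w - w* | w<m)·var(Y | w<m)). -/

import Mathlib

open MeasureTheory ProbabilityTheory

section Helpers

variable {Ω : Type*} [MeasurableSpace Ω] {ν : Measure Ω}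

lemma l2_int_mul {f g : Ω → ℝ} (hf : MemLp f 2 ν) (hg : MemLp g 2 ν) :
    Integrable (fun ω => f ω * g ω) ν := by
  rw [← memLp_one_iff_integrable]
  have h := hg.smul (𝕜 := ℝ) (r := 1) hf
  exact h

lemma l2_cs {f g : Ω → ℝ} (hf : MemLp f 2 ν) (hg : MemLp g 2 ν) :
    |∫ ω, f ω * g ω ∂ν| ≤ Real.sqrt (∫ ω, f ω ^ 2 ∂ν) * Real.sqrt (∫ ω, g ω ^ 2 ∂ν) := by
  have h2 : Real.HolderConjugate 2 2 := Real.HolderConjugate.two_two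
  have hfa : MemLp (fun ω => |f ω|) (ENNReal.ofReal 2) ν := by
    have := hf.norm
    simpa [Real.norm_eq_abs, ENNReal.ofReal_ofNat] using this
  have hga : MemLp (fun ω => |g ω|) (ENNReal.ofReal 2) ν := by
    have := hg.norm
    simpa [Real.norm_eq_abs, ENNReal.ofReal_ofNat] using this
  have hint := integral_mul_le_Lp_mul_Lq_of_nonneg h2
    (Filter.Eventually.of_forall fun ω => abs_nonneg (f ω))
    (Filter.Eventually.of_forall fun ω => abs_nonneg (g ω)) hfa hga
  have h1 : |∫ ω, f ω * g ω ∂ν| ≤ ∫ ω, |f ω| * |g ω| ∂ν := by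
    simpa [Real.norm_eq_abs, abs_mul] using
      norm_integral_le_integral_norm (μ := ν) (f := fun ω => f ω * g ω)
  have hsqf : ∫ ω, |f ω| ^ (2 : ℝ) ∂ν = ∫ ω, f ω ^ 2 ∂ν := by
    refine integral_congr_ae (Filter.Eventually.of_forall fun ω => ?_)
    show |f ω| ^ (2 : ℝ) = f ω ^ 2
    rw [Real.rpow_two, sq_abs]
  have hsqg : ∫ ω, |g ω| ^ (2 : ℝ) ∂ν = ∫ ω, g ω ^ 2 ∂ν := by
    refine integral_congr_ae (Filter.Eventually.of_forall fun ω => ?_)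
    show |g ω| ^ (2 : ℝ) = g ω ^ 2
    rw [Real.rpow_two, sq_abs]
  rw [hsqf, hsqg] at hint
  have hnn1 : (0 : ℝ) ≤ ∫ ω, f ω ^ 2 ∂ν := integral_nonneg fun ω => sq_nonneg _
  have hnn2 : (0 : ℝ) ≤ ∫ ω, g ω ^ 2 ∂ν := integral_nonneg fun ω => sq_nonneg _
  calc |∫ ω, f ω * g ω ∂ν| ≤ ∫ ω, |f ω| * |g ω| ∂ν := h1
    _ ≤ (∫ ω, f ω ^ 2 ∂ν) ^ ((1 : ℝ)/2) * (∫ ω, g ω ^ 2 ∂ν) ^ ((1 : ℝ)/2) := hint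
    _ = Real.sqrt (∫ ω, f ω ^ 2 ∂ν) * Real.sqrt (∫ ω, g ω ^ 2 ∂ν) := by
        rw [Real.sqrt_eq_rpow, Real.sqrt_eq_rpow]

lemma integral_center_mul [IsProbabilityMeasure ν] {f g : Ω → ℝ}
    (hf : MemLp f 2 ν) (hg : MemLp g 2 ν) :
    ∫ ω, (f ω - ∫ x, f x ∂ν) * (g ω - ∫ x, g x ∂ν) ∂ν
      = (∫ ω, f ω * g ω ∂ν) - (∫ ω, f ω ∂ν) * (∫ ω, g ω ∂ν) := by
  set a := ∫ x, f x ∂ν with ha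
  set b := ∫ x, g x ∂ν with hb
  have hif : Integrable f ν := hf.integrable one_le_two
  have hig : Integrable g ν := hg.integrable one_le_two
  have hifg : Integrable (fun ω => f ω * g ω) ν := l2_int_mul hf hg
  have hexp : ∀ ω, (f ω - a) * (g ω - b)
      = f ω * g ω - b * f ω - a * g ω + a * b := by intro ω; ring
  simp_rw [hexp]
  have i1 : Integrable (fun ω => f ω * g ω - b * f ω) ν := hifg.sub (hif.const_mul b)
  have i2 : Integrable (fun ω => f ω * g ω - b * f ω - a * g ω) ν := i1.sub (hig.const_mul a)
  rw [integral_add i2 (integrable_const _), integral_sub i1 (hig.const_mul a),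
    integral_sub hifg (hif.const_mul b), integral_const_mul, integral_const_mul,
    integral_const]
  simp only [measure_univ, probReal_univ, ENNReal.toReal_one, one_smul, smul_eq_mul, ← ha, ← hb]
  ring

lemma integral_center_sq [IsProbabilityMeasure ν] {f : Ω → ℝ} (hf : MemLp f 2 ν) :
    ∫ ω, (f ω - ∫ x, f x ∂ν) ^ 2 ∂ν = variance f ν := by
  have h := integral_center_mul hf hf
  simp_rw [← sq] at h
  rw [h, variance_eq_sub hf]
  simp [sq]

lemma cov_abs_le [IsProbabilityMeasure ν] {f g : Ω → ℝ}
    (hf : MemLp f 2 ν) (hg : MemLp g 2 ν) :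
    |(∫ ω, f ω * g ω ∂ν) - (∫ ω, f ω ∂ν) * (∫ ω, g ω ∂ν)|
      ≤ Real.sqrt (variance f ν) * Real.sqrt (variance g ν) := by
  have hf' : MemLp (fun ω => f ω - ∫ x, f x ∂ν) 2 ν := hf.sub (memLp_const _)
  have hg' : MemLp (fun ω => g ω - ∫ x, g x ∂ν) 2 ν := hg.sub (memLp_const _)
  have key := l2_cs hf' hg'
  rwa [integral_center_mul hf hg, integral_center_sq hf, integral_center_sq hg] at key

end Helpers

theorem stmt_14 {Ω : Type*} [MeasurableSpace Ω] (μ : Measure Ω) [IsProbabilityMeasure μ]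
    (w Y wstar : Ω → ℝ) (m : ℝ) (hm : 0 < m)
    (hw : MemLp w 2 μ) (hY : MemLp Y 2 μ) (hws : MemLp wstar 2 μ)
    (hwmeas : Measurable w) (hwpos : ∀ ω, 0 < w ω)
    (hA : μ {ω | w ω < m} ≠ 0)
    (hmean1 : ∫ ω, w ω ∂(μ[|{ω | w ω < m}]) = 1)
    (hmeanstar : ∫ ω, wstar ω ∂(μ[|{ω | w ω < m}]) = 1)
    (horth : ∀ h : ℝ → ℝ, Measurable h →
      ∫ ω, (w ω - wstar ω) * h (w ω) ∂(μ[|{ω | w ω < m}]) = 0) :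
    let μ' := μ[|{ω | w ω < m}]
    let cov : (Ω → ℝ) → (Ω → ℝ) → ℝ := fun X Z =>
      (∫ ω, X ω * Z ω ∂μ') - (∫ ω, X ω ∂μ') * (∫ ω, Z ω ∂μ')
    let cor : (Ω → ℝ) → (Ω → ℝ) → ℝ := fun X Z =>
      cov X Z / (Real.sqrt (variance X μ') * Real.sqrt (variance Z μ'))
    (∫ ω, (w ω - wstar ω) * Y ω ∂μ') = cov (fun ω => w ω - wstar ω) Y ∧
    |∫ ω, (w ω - wstar ω) * Y ω ∂μ'| ≤
      Real.sqrt (1 - (cor w Y) ^ 2) *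
        Real.sqrt (variance (fun ω => w ω - wstar ω) μ' * variance Y μ') := by
  intro μ' cov cor
  set s : Set Ω := {ω | w ω < m} with hs
  haveI : IsProbabilityMeasure μ' := cond_isProbabilityMeasure hA
  -- transfer MemLp to μ'
  have hcond : μ' = (μ s)⁻¹ • μ.restrict s := rfl
  have htrans : ∀ f : Ω → ℝ, MemLp f 2 μ → MemLp f 2 μ' := by
    intro f hf
    rw [hcond]
    exact (hf.restrict s).smul_measure (ENNReal.inv_ne_top.mpr hA)
  have hw' : MemLp w 2 μ' := htrans w hw
  have hY' : MemLp Y 2 μ' := htrans Y hY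
  have hws' : MemLp wstar 2 μ' := htrans wstar hws
  have he' : MemLp (fun ω => w ω - wstar ω) 2 μ' := hw'.sub hws'
  have hiw : Integrable w μ' := hw'.integrable one_le_two
  have hiws : Integrable wstar μ' := hws'.integrable one_le_two
  -- mean of e is zero
  have he0 : ∫ ω, (w ω - wstar ω) ∂μ' = 0 := by
    rw [integral_sub hiw hiws, hmean1, hmeanstar]; ring
  -- e orthogonal to w
  have hew : ∫ ω, (w ω - wstar ω) * w ω ∂μ' = 0 := horth id measurable_id
  -- first conjunct
  have hfirst : (∫ ω, (w ω - wstar ω) * Y ω ∂μ') = cov (fun ω => w ω - wstar ω) Y := by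
    show _ = _ - _ * _
    rw [he0]; ring
  refine ⟨hfirst, ?_⟩
  -- notation
  set a := variance w μ' with hva
  set b := variance Y μ' with hvb
  set v := variance (fun ω => w ω - wstar ω) μ' with hvv
  set c0 : ℝ := cov w Y with hc0
  have ha0 : 0 ≤ a := variance_nonneg _ _
  have hb0 : 0 ≤ b := variance_nonneg _ _
  have hv0 : 0 ≤ v := variance_nonneg _ _
  set t := ∫ ω, (w ω - wstar ω) * Y ω ∂μ' with ht
  -- basic covariance bound
  have hbasic : |t| ≤ Real.sqrt v * Real.sqrt b := by
    have h := cov_abs_le he' hY'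
    rw [he0] at h
    simpa [ht, hvv, hvb] using h
  have hcwY : |c0| ≤ Real.sqrt a * Real.sqrt b := cov_abs_le hw' hY'
  by_cases hcase : a = 0 ∨ b = 0
  · -- degenerate case: cor w Y = 0
    have hcor : cor w Y = 0 := by
      show cov w Y / _ = 0
      rcases hcase with h | h
      · rw [← hva, h]; simp
      · rw [← hvb, h]; simp
    rw [hcor]
    simpa [Real.sqrt_mul hv0] using hbasic
  · push_neg at hcase
    have hapos : 0 < a := lt_of_le_of_ne ha0 (Ne.symm hcase.1)
    have hbpos : 0 < b := lt_of_le_of_ne hb0 (Ne.symm hcase.2)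
    -- the residual Z = Y - (c0/a) w
    set β := c0 / a with hβ
    set Z : Ω → ℝ := fun ω => Y ω - β * w ω with hZ
    have hZ' : MemLp Z 2 μ' := hY'.sub (hw'.const_mul β)
    have hiY : Integrable Y μ' := hY'.integrable one_le_two
    have hie : Integrable (fun ω => w ω - wstar ω) μ' := hiw.sub hiws
    have hieY : Integrable (fun ω => (w ω - wstar ω) * Y ω) μ' := l2_int_mul he' hY'
    have hiew : Integrable (fun ω => (w ω - wstar ω) * w ω) μ' := l2_int_mul he' hw'
    have hiwY : Integrable (fun ω => w ω * Y ω) μ' := l2_int_mul hw' hY'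
    have hiw2 : Integrable (fun ω => w ω * w ω) μ' := l2_int_mul hw' hw'
    have hiY2 : Integrable (fun ω => Y ω * Y ω) μ' := l2_int_mul hY' hY'
    -- cov(e, Z) = t
    have hcovEZ : (∫ ω, (w ω - wstar ω) * Z ω ∂μ')
        - (∫ ω, (w ω - wstar ω) ∂μ') * (∫ ω, Z ω ∂μ') = t := by
      rw [he0, zero_mul, sub_zero]
      have : ∀ ω, (w ω - wstar ω) * Z ω
          = (w ω - wstar ω) * Y ω - β * ((w ω - wstar ω) * w ω) := by
        intro ω; simp only [hZ]; ring
      simp_rw [this]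
      rw [integral_sub hieY (hiew.const_mul β), integral_const_mul, hew, ht]
      ring
    -- variance of Z
    have hvarZ : variance Z μ' = b - c0 ^ 2 / a := by
      have hZsq : ∀ ω, Z ω * Z ω
          = Y ω * Y ω - 2 * β * (w ω * Y ω) + β ^ 2 * (w ω * w ω) := by
        intro ω; simp only [hZ]; ring
      have h1 : ∫ ω, Z ω * Z ω ∂μ'
          = (∫ ω, Y ω * Y ω ∂μ') - 2 * β * (∫ ω, w ω * Y ω ∂μ')
            + β ^ 2 * (∫ ω, w ω * w ω ∂μ') := by
        simp_rw [hZsq]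
        have j1 : Integrable (fun ω => Y ω * Y ω - 2 * β * (w ω * Y ω)) μ' :=
          hiY2.sub (hiwY.const_mul (2 * β))
        rw [integral_add j1 (hiw2.const_mul (β ^ 2)),
          integral_sub hiY2 (hiwY.const_mul (2 * β)), integral_const_mul, integral_const_mul]
      have h2 : ∫ ω, Z ω ∂μ' = (∫ ω, Y ω ∂μ') - β * (∫ ω, w ω ∂μ') := by
        simp only [hZ]
        rw [integral_sub hiY (hiw.const_mul β), integral_const_mul]
      have hvZ : variance Z μ' = (∫ ω, Z ω * Z ω ∂μ') - (∫ ω, Z ω ∂μ') ^ 2 := by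
        rw [variance_eq_sub hZ']
        simp [sq]
      have hvY : b = (∫ ω, Y ω * Y ω ∂μ') - (∫ ω, Y ω ∂μ') ^ 2 := by
        rw [hvb, variance_eq_sub hY']; simp [sq]
      have hvW : a = (∫ ω, w ω * w ω ∂μ') - (∫ ω, w ω ∂μ') ^ 2 := by
        rw [hva, variance_eq_sub hw']; simp [sq]
      have hcWY : c0 = (∫ ω, w ω * Y ω ∂μ') - (∫ ω, w ω ∂μ') * (∫ ω, Y ω ∂μ') := rfl
      rw [hvZ, h1, h2]
      have : variance Z μ' = b - 2 * β * c0 + β ^ 2 * a := by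
        rw [hvZ, h1, h2, hvY, hvW, hcWY]; ring
      rw [hvZ, h1, h2] at this
      rw [this, hβ]
      field_simp
      ring
    -- apply Cauchy-Schwarz to e, Z
    have hkey : |t| ≤ Real.sqrt v * Real.sqrt (b - c0 ^ 2 / a) := by
      have h := cov_abs_le he' hZ'
      rw [hcovEZ, hvarZ] at h
      rwa [← hvv] at h
    -- compute cor
    have hcor : cor w Y = c0 / (Real.sqrt a * Real.sqrt b) := rfl
    have hsab : (Real.sqrt a * Real.sqrt b) ^ 2 = a * b := by
      rw [mul_pow, Real.sq_sqrt ha0, Real.sq_sqrt hb0]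
    have hcor2 : (cor w Y) ^ 2 = c0 ^ 2 / (a * b) := by
      rw [hcor, div_pow, hsab]
    have hresnn : 0 ≤ b - c0 ^ 2 / a := by
      rw [← hvarZ]; exact variance_nonneg _ _
    have hc2 : c0 ^ 2 ≤ a * b := by
      have := pow_le_pow_left₀ (abs_nonneg c0) hcwY 2
      rwa [sq_abs, hsab] at this
    have hrhs : Real.sqrt (1 - (cor w Y) ^ 2) * Real.sqrt (v * b)
        = Real.sqrt v * Real.sqrt (b - c0 ^ 2 / a) := by
      rw [hcor2]
      have h1 : (1 - c0 ^ 2 / (a * b)) * (v * b) = v * (b - c0 ^ 2 / a) := by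
        field_simp
      rw [← Real.sqrt_mul (by
        have h3 : c0 ^ 2 / (a * b) ≤ 1 := by
          rw [div_le_one (by positivity)]
          exact hc2
        linarith) (v * b), h1, Real.sqrt_mul hv0]
    rw [hrhs]
    exact hkey
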